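/- arXiv:2605.30749 — 2 statements merged into one kernel-verified Lean document; each statement's English description precedes it below -/
import Mathlib

section
/- Discounted visitation difference bound: under the assumptions of the step-t coupling bound, the discounted state visitation measures ρ_π = Σ_{t≥0} γ^t d_t^π and ρ_{π̃} = Σ_{t≥0} γ^t d_t^{π̃} satisfy ‖ρ_π − ρ_{π̃}‖₁ ≤ 2γ δ_TV / (1−γ)². -/
open scoped BigOperators
set_option maxHeartbeats 1000000

/-- The time-`t` state distribution of a finite MDP with transition kernel `p`,
policy `π` and initial distribution `d0`. -/
noncomputable def stateDist {SS AA : Type} [Fintype SS] [Fintype AA]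
    (p : SS → AA → SS → ℝ) (π : SS → AA → ℝ) (d0 : SS → ℝ) : ℕ → SS → ℝ
  | 0 => d0
  | (t + 1) => fun s' => ∑ s, ∑ a, stateDist p π d0 t s * π s a * p s a s'

lemma sd_nonneg {SS AA : Type} [Fintype SS] [Fintype AA]
    (p : SS → AA → SS → ℝ) (π : SS → AA → ℝ) (d0 : SS → ℝ)
    (hp : ∀ s a, (∀ s', 0 ≤ p s a s') ∧ ∑ s', p s a s' = 1)
    (hπ : ∀ s, (∀ a, 0 ≤ π s a) ∧ ∑ a, π s a = 1)
    (hd0 : ∀ s, 0 ≤ d0 s) :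
    ∀ t s, 0 ≤ stateDist p π d0 t s := by
  intro t
  induction t with
  | zero => exact hd0
  | succ t ih =>
    intro s'
    simp only [stateDist]
    refine Finset.sum_nonneg fun s _ => Finset.sum_nonneg fun a _ => ?_
    exact mul_nonneg (mul_nonneg (ih s) ((hπ s).1 a)) ((hp s a).1 s')

lemma sd_sum_one {SS AA : Type} [Fintype SS] [Fintype AA]
    (p : SS → AA → SS → ℝ) (π : SS → AA → ℝ) (d0 : SS → ℝ)
    (hp : ∀ s a, (∀ s', 0 ≤ p s a s') ∧ ∑ s', p s a s' = 1)
    (hπ : ∀ s, (∀ a, 0 ≤ π s a) ∧ ∑ a, π s a = 1)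
    (hd0 : ∑ s, d0 s = 1) :
    ∀ t, ∑ s, stateDist p π d0 t s = 1 := by
  intro t
  induction t with
  | zero => exact hd0
  | succ t ih =>
    simp only [stateDist]
    rw [Finset.sum_comm]
    calc ∑ s, ∑ s', ∑ a, stateDist p π d0 t s * π s a * p s a s'
        = ∑ s, ∑ a, stateDist p π d0 t s * π s a * ∑ s', p s a s' := by
          refine Finset.sum_congr rfl fun s _ => ?_
          rw [Finset.sum_comm]
          exact Finset.sum_congr rfl fun a _ => (Finset.mul_sum _ _ _).symm
      _ = ∑ s, stateDist p π d0 t s * ∑ a, π s a := by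
          refine Finset.sum_congr rfl fun s _ => ?_
          rw [Finset.mul_sum]
          exact Finset.sum_congr rfl fun a _ => by rw [(hp s a).2, mul_one]
      _ = 1 := by
          simp only [fun s => (hπ s).2, mul_one]; exact ih

lemma sd_diff_bound {SS AA : Type} [Fintype SS] [Fintype AA]
    (p : SS → AA → SS → ℝ) (π πt : SS → AA → ℝ) (d0 : SS → ℝ) (δTV : ℝ)
    (hp : ∀ s a, (∀ s', 0 ≤ p s a s') ∧ ∑ s', p s a s' = 1)
    (hπ : ∀ s, (∀ a, 0 ≤ π s a) ∧ ∑ a, π s a = 1)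
    (hπt : ∀ s, (∀ a, 0 ≤ πt s a) ∧ ∑ a, πt s a = 1)
    (hd0 : (∀ s, 0 ≤ d0 s) ∧ ∑ s, d0 s = 1)
    (hδ0 : 0 ≤ δTV)
    (hTV : ∀ s, (1 / 2) * ∑ a, |π s a - πt s a| ≤ δTV) :
    ∀ t, ∑ s, |stateDist p π d0 t s - stateDist p πt d0 t s| ≤ 2 * t * δTV := by
  intro t
  induction t with
  | zero => simp [show stateDist p π d0 0 = d0 from rfl, show stateDist p πt d0 0 = d0 from rfl]
  | succ t ih =>
    set Dπ := stateDist p π d0 t with hDπ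
    set Dt := stateDist p πt d0 t with hDt
    have expand : ∀ s', stateDist p π d0 (t + 1) s' - stateDist p πt d0 (t + 1) s' =
        ∑ s, ∑ a, ((Dπ s - Dt s) * π s a + Dt s * (π s a - πt s a)) * p s a s' := by
      intro s'
      simp only [stateDist, ← Finset.sum_sub_distrib, ← hDπ, ← hDt]
      refine Finset.sum_congr rfl fun s _ => Finset.sum_congr rfl fun a _ => by ring
    have habs : ∀ s', |stateDist p π d0 (t + 1) s' - stateDist p πt d0 (t + 1) s'| ≤
        ∑ s, ∑ a, (|Dπ s - Dt s| * π s a + Dt s * |π s a - πt s a|) * p s a s' := by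
      intro s'
      rw [expand s']
      refine (Finset.abs_sum_le_sum_abs _ _).trans ?_
      refine Finset.sum_le_sum fun s _ => ?_
      refine (Finset.abs_sum_le_sum_abs _ _).trans ?_
      refine Finset.sum_le_sum fun a _ => ?_
      rw [abs_mul, abs_of_nonneg ((hp s a).1 s')]
      refine mul_le_mul_of_nonneg_right ?_ ((hp s a).1 s')
      refine (abs_add_le _ _).trans ?_
      rw [abs_mul, abs_mul, abs_of_nonneg ((hπ s).1 a),
        abs_of_nonneg (sd_nonneg p πt d0 hp hπt hd0.1 t s)]
    calc ∑ s', |stateDist p π d0 (t + 1) s' - stateDist p πt d0 (t + 1) s'|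
        ≤ ∑ s', ∑ s, ∑ a, (|Dπ s - Dt s| * π s a + Dt s * |π s a - πt s a|) * p s a s' :=
          Finset.sum_le_sum fun s' _ => habs s'
      _ = ∑ s, ∑ a, (|Dπ s - Dt s| * π s a + Dt s * |π s a - πt s a|) * ∑ s', p s a s' := by
          rw [Finset.sum_comm]
          refine Finset.sum_congr rfl fun s _ => ?_
          rw [Finset.sum_comm]
          exact Finset.sum_congr rfl fun a _ => (Finset.mul_sum _ _ _).symm
      _ = ∑ s, (|Dπ s - Dt s| * ∑ a, π s a) + ∑ s, Dt s * ∑ a, |π s a - πt s a| := by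
          rw [← Finset.sum_add_distrib]
          refine Finset.sum_congr rfl fun s _ => ?_
          rw [Finset.mul_sum, Finset.mul_sum, ← Finset.sum_add_distrib]
          refine Finset.sum_congr rfl fun a _ => ?_
          rw [(hp s a).2, mul_one]
      _ ≤ 2 * t * δTV + 2 * δTV := by
          refine add_le_add ?_ ?_
          · simp only [fun s => (hπ s).2, mul_one]
            exact ih
          · have h2 : ∀ s, Dt s * ∑ a, |π s a - πt s a| ≤ Dt s * (2 * δTV) := by
              intro s
              refine mul_le_mul_of_nonneg_left ?_ (sd_nonneg p πt d0 hp hπt hd0.1 t s)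
              have := hTV s; linarith
            refine (Finset.sum_le_sum fun s _ => h2 s).trans ?_
            rw [← Finset.sum_mul, sd_sum_one p πt d0 hp hπt hd0.2 t, one_mul]
      _ = 2 * (t + 1 : ℕ) * δTV := by push_cast; ring

/-- Discounted visitation difference bound: `‖ρ_π − ρ_π̃‖₁ ≤ 2γ δTV / (1−γ)²`, where
`ρ_π(s) = ∑_{t≥0} γ^t d_t^π(s)` and `δTV` bounds the statewise total variation between
the two policies. -/
theorem discounted_visitation_bound {SS AA : Type} [Fintype SS] [Fintype AA]
    (p : SS → AA → SS → ℝ) (π πt : SS → AA → ℝ) (d0 : SS → ℝ) (δTV γ : ℝ)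
    (hp : ∀ s a, (∀ s', 0 ≤ p s a s') ∧ ∑ s', p s a s' = 1)
    (hπ : ∀ s, (∀ a, 0 ≤ π s a) ∧ ∑ a, π s a = 1)
    (hπt : ∀ s, (∀ a, 0 ≤ πt s a) ∧ ∑ a, πt s a = 1)
    (hd0 : (∀ s, 0 ≤ d0 s) ∧ ∑ s, d0 s = 1)
    (hδ0 : 0 ≤ δTV) (hδ1 : δTV ≤ 1)
    (hγ0 : 0 ≤ γ) (hγ1 : γ < 1)
    (hTV : ∀ s, (1 / 2) * ∑ a, |π s a - πt s a| ≤ δTV) :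
    (∑ s, |(∑' t : ℕ, γ ^ t * stateDist p π d0 t s) -
        ∑' t : ℕ, γ ^ t * stateDist p πt d0 t s|) ≤
      2 * γ * δTV / (1 - γ) ^ 2 := by
  have hgeo : Summable fun t : ℕ => γ ^ t := summable_geometric_of_lt_one hγ0 hγ1
  have hle1 : ∀ (π' : SS → AA → ℝ), (∀ s, (∀ a, 0 ≤ π' s a) ∧ ∑ a, π' s a = 1) →
      ∀ t s, stateDist p π' d0 t s ≤ 1 := by
    intro π' hπ' t s
    calc stateDist p π' d0 t s ≤ ∑ s', stateDist p π' d0 t s' :=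
          Finset.single_le_sum (fun s' _ => sd_nonneg p π' d0 hp hπ' hd0.1 t s')
            (Finset.mem_univ s)
      _ = 1 := sd_sum_one p π' d0 hp hπ' hd0.2 t
  have hsum : ∀ (π' : SS → AA → ℝ), (∀ s, (∀ a, 0 ≤ π' s a) ∧ ∑ a, π' s a = 1) →
      ∀ s, Summable fun t : ℕ => γ ^ t * stateDist p π' d0 t s := by
    intro π' hπ' s
    refine Summable.of_nonneg_of_le (fun t => ?_) (fun t => ?_) hgeo
    · exact mul_nonneg (pow_nonneg hγ0 t) (sd_nonneg p π' d0 hp hπ' hd0.1 t s)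
    · calc γ ^ t * stateDist p π' d0 t s ≤ γ ^ t * 1 :=
            mul_le_mul_of_nonneg_left (hle1 π' hπ' t s) (pow_nonneg hγ0 t)
        _ = γ ^ t := mul_one _
  -- summable bound function
  have htγ : Summable fun t : ℕ => (t : ℝ) * γ ^ t := by
    have := summable_pow_mul_geometric_of_norm_lt_one 1 (by rwa [Real.norm_of_nonneg hγ0])
    simpa using this
  have hbd : Summable fun t : ℕ => γ ^ t * (2 * (t : ℝ) * δTV) := by
    have := htγ.mul_left (2 * δTV)
    refine this.congr fun t => by ring
  have habs : ∀ s, Summable fun t : ℕ =>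
      |γ ^ t * stateDist p π d0 t s - γ ^ t * stateDist p πt d0 t s| := by
    intro s
    exact ((hsum π hπ s).sub (hsum πt hπt s)).abs
  calc (∑ s, |(∑' t : ℕ, γ ^ t * stateDist p π d0 t s) -
        ∑' t : ℕ, γ ^ t * stateDist p πt d0 t s|)
      ≤ ∑ s, ∑' t : ℕ, |γ ^ t * stateDist p π d0 t s - γ ^ t * stateDist p πt d0 t s| := by
        refine Finset.sum_le_sum fun s _ => ?_
        rw [← Summable.tsum_sub (hsum π hπ s) (hsum πt hπt s)]
        have := norm_tsum_le_tsum_norm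
          (f := fun t : ℕ => γ ^ t * stateDist p π d0 t s - γ ^ t * stateDist p πt d0 t s)
          (by simpa [Real.norm_eq_abs] using habs s)
        simpa [Real.norm_eq_abs] using this
    _ = ∑' t : ℕ, ∑ s, |γ ^ t * stateDist p π d0 t s - γ ^ t * stateDist p πt d0 t s| :=
        (Summable.tsum_finsetSum (fun s _ => habs s)).symm
    _ ≤ ∑' t : ℕ, γ ^ t * (2 * (t : ℝ) * δTV) := by
        refine Summable.tsum_le_tsum (fun t => ?_) ?_ hbd
        · have : ∀ s, |γ ^ t * stateDist p π d0 t s - γ ^ t * stateDist p πt d0 t s|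
              = γ ^ t * |stateDist p π d0 t s - stateDist p πt d0 t s| := by
            intro s
            rw [← mul_sub, abs_mul, abs_of_nonneg (pow_nonneg hγ0 t)]
          simp only [this]
          rw [← Finset.mul_sum]
          exact mul_le_mul_of_nonneg_left
            (sd_diff_bound p π πt d0 δTV hp hπ hπt hd0 hδ0 hTV t) (pow_nonneg hγ0 t)
        · refine Summable.of_nonneg_of_le (fun t => Finset.sum_nonneg fun s _ => abs_nonneg _)
            (fun t => ?_) hbd
          have : ∀ s, |γ ^ t * stateDist p π d0 t s - γ ^ t * stateDist p πt d0 t s|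
              = γ ^ t * |stateDist p π d0 t s - stateDist p πt d0 t s| := by
            intro s
            rw [← mul_sub, abs_mul, abs_of_nonneg (pow_nonneg hγ0 t)]
          simp only [this]
          rw [← Finset.mul_sum]
          exact mul_le_mul_of_nonneg_left
            (sd_diff_bound p π πt d0 δTV hp hπ hπt hd0 hδ0 hTV t) (pow_nonneg hγ0 t)
    _ = 2 * δTV * ∑' t : ℕ, (t : ℝ) * γ ^ t := by
        rw [← tsum_mul_left]
        exact tsum_congr fun t => by ring
    _ = 2 * δTV * (γ / (1 - γ) ^ 2) := by
        rw [tsum_coe_mul_geometric_of_norm_lt_one (by rwa [Real.norm_of_nonneg hγ0])]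
    _ = 2 * γ * δTV / (1 - γ) ^ 2 := by ring
end

section
/- Soft Q-function closeness between a Gaussian-smoothed policy and its base policy: let π̃ be a base policy and π its composition with small Gaussian noise, with statewise total variation δ_TV. Let Q^π be the fixed point of the cross-entropy-regularized soft Bellman operator (with bonus −α log π̃ under π) and Q^{π̃} the fixed point of the entropy-regularized soft Bellman operator under π̃. Assume |log π̃(a|s)| ≤ C_R and rewards are bounded so ‖Q^{π̃}‖_∞ ≤ R_max/(1−γ). Then ‖Q^π − Q^{π̃}‖_∞ ≤ (2δ_TV/(1−γ)) (αC_R + γ‖Q^{π̃}‖_∞). -/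
open scoped BigOperators

/-- Soft Q-function closeness: let `Qπ` be the fixed point of the cross-entropy
regularized soft Bellman operator (bonus `−α log π̃` under policy `π`) and `Qπt` the
fixed point of the entropy-regularized soft Bellman operator under `π̃`. If the
statewise total variation between `π` and `π̃` is at most `δTV`, `|log π̃(a|s)| ≤ CR`,
and `|Qπt| ≤ M` (e.g. `M = R_max/(1−γ)`), then
`‖Qπ − Qπt‖_∞ ≤ (2δTV/(1−γ)) (α CR + γ M)`. -/
theorem soft_Q_closeness {SS AA : Type} [Fintype SS] [Fintype AA]
    (r : SS → AA → ℝ) (p : SS → AA → SS → ℝ) (π πt : SS → AA → ℝ)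
    (α γ CR M δTV : ℝ)
    (hα : 0 ≤ α) (hγ0 : 0 ≤ γ) (hγ1 : γ < 1) (hδ : 0 ≤ δTV)
    (hp : ∀ s a, (∀ s', 0 ≤ p s a s') ∧ ∑ s', p s a s' = 1)
    (hπ : ∀ s, (∀ a, 0 ≤ π s a) ∧ ∑ a, π s a = 1)
    (hπt : ∀ s, (∀ a, 0 < πt s a) ∧ ∑ a, πt s a = 1)
    (hTV : ∀ s, (1 / 2) * ∑ a, |π s a - πt s a| ≤ δTV)
    (hCR : ∀ s a, |Real.log (πt s a)| ≤ CR)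
    (Qπ Qπt : SS → AA → ℝ)
    (hQπ : ∀ s a, Qπ s a = r s a + γ * ∑ s', p s a s' *
        ((α * ∑ a', π s' a' * (-Real.log (πt s' a'))) + ∑ a', π s' a' * Qπ s' a'))
    (hQπt : ∀ s a, Qπt s a = r s a + γ * ∑ s', p s a s' *
        ((α * ∑ a', πt s' a' * (-Real.log (πt s' a'))) + ∑ a', πt s' a' * Qπt s' a'))
    (hM : ∀ s a, |Qπt s a| ≤ M) :
    ∀ s a, |Qπ s a - Qπt s a| ≤ (2 * δTV / (1 - γ)) * (α * CR + γ * M) := by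
  intro s₀ a₀
  classical
  have hne : (Finset.univ : Finset (SS × AA)).Nonempty := ⟨(s₀, a₀), Finset.mem_univ _⟩
  set f : SS × AA → ℝ := fun q => |Qπ q.1 q.2 - Qπt q.1 q.2| with hf
  set D := Finset.univ.sup' hne f with hD
  have hfD : ∀ s a, |Qπ s a - Qπt s a| ≤ D := fun s a =>
    Finset.le_sup' f (Finset.mem_univ (s, a))
  have hCR0 : 0 ≤ CR := le_trans (abs_nonneg _) (hCR s₀ a₀)
  have hM0 : 0 ≤ M := le_trans (abs_nonneg _) (hM s₀ a₀)
  have hD0 : 0 ≤ D := le_trans (abs_nonneg _) (hfD s₀ a₀)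
  have hTV' : ∀ s, ∑ a, |π s a - πt s a| ≤ 2 * δTV := by
    intro s
    have := hTV s
    linarith
  -- key bound
  have key : ∀ s a, |Qπ s a - Qπt s a| ≤ γ * (2 * δTV * (α * CR) + D + 2 * δTV * M) := by
    intro s a
    have hdiff : Qπ s a - Qπt s a = γ * ∑ s', p s a s' *
        ((α * ∑ a', (π s' a' - πt s' a') * (-Real.log (πt s' a')))
          + (∑ a', π s' a' * (Qπ s' a' - Qπt s' a'))
          + (∑ a', (π s' a' - πt s' a') * Qπt s' a')) := by
      rw [hQπ s a, hQπt s a]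
      have hinner : ∀ s', ((α * ∑ a', (π s' a' - πt s' a') * (-Real.log (πt s' a')))
          + (∑ a', π s' a' * (Qπ s' a' - Qπt s' a'))
          + (∑ a', (π s' a' - πt s' a') * Qπt s' a'))
        = ((α * ∑ a', π s' a' * (-Real.log (πt s' a'))) + ∑ a', π s' a' * Qπ s' a')
          - ((α * ∑ a', πt s' a' * (-Real.log (πt s' a'))) + ∑ a', πt s' a' * Qπt s' a') := by
        intro s'
        simp only [sub_mul, mul_sub, Finset.sum_sub_distrib]
        ring
      rw [add_sub_add_left_eq_sub, ← mul_sub, ← Finset.sum_sub_distrib]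
      congr 1
      refine Finset.sum_congr rfl fun s' _ => ?_
      rw [← mul_sub]
      congr 1
      exact (hinner s').symm
    rw [hdiff, abs_mul, abs_of_nonneg hγ0]
    have hX : ∀ s', |((α * ∑ a', (π s' a' - πt s' a') * (-Real.log (πt s' a')))
          + (∑ a', π s' a' * (Qπ s' a' - Qπt s' a'))
          + (∑ a', (π s' a' - πt s' a') * Qπt s' a'))|
        ≤ 2 * δTV * (α * CR) + D + 2 * δTV * M := by
      intro s'
      have h1 : |α * ∑ a', (π s' a' - πt s' a') * (-Real.log (πt s' a'))|
          ≤ 2 * δTV * (α * CR) := by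
        rw [abs_mul, abs_of_nonneg hα]
        have : |∑ a', (π s' a' - πt s' a') * (-Real.log (πt s' a'))| ≤ 2 * δTV * CR := by
          calc |∑ a', (π s' a' - πt s' a') * (-Real.log (πt s' a'))|
              ≤ ∑ a', |(π s' a' - πt s' a') * (-Real.log (πt s' a'))| :=
                Finset.abs_sum_le_sum_abs _ _
            _ ≤ ∑ a', |π s' a' - πt s' a'| * CR := by
                apply Finset.sum_le_sum
                intro a' _
                rw [abs_mul, abs_neg]
                exact mul_le_mul_of_nonneg_left (hCR s' a') (abs_nonneg _)
            _ = (∑ a', |π s' a' - πt s' a'|) * CR := by rw [Finset.sum_mul]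
            _ ≤ 2 * δTV * CR := mul_le_mul_of_nonneg_right (hTV' s') hCR0
        nlinarith
      have h2 : |∑ a', π s' a' * (Qπ s' a' - Qπt s' a')| ≤ D := by
        calc |∑ a', π s' a' * (Qπ s' a' - Qπt s' a')|
            ≤ ∑ a', |π s' a' * (Qπ s' a' - Qπt s' a')| := Finset.abs_sum_le_sum_abs _ _
          _ ≤ ∑ a', π s' a' * D := by
              apply Finset.sum_le_sum
              intro a' _
              rw [abs_mul, abs_of_nonneg ((hπ s').1 a')]
              exact mul_le_mul_of_nonneg_left (hfD s' a') ((hπ s').1 a')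
          _ = D := by rw [← Finset.sum_mul, (hπ s').2, one_mul]
      have h3 : |∑ a', (π s' a' - πt s' a') * Qπt s' a'| ≤ 2 * δTV * M := by
        calc |∑ a', (π s' a' - πt s' a') * Qπt s' a'|
            ≤ ∑ a', |(π s' a' - πt s' a') * Qπt s' a'| := Finset.abs_sum_le_sum_abs _ _
          _ ≤ ∑ a', |π s' a' - πt s' a'| * M := by
              apply Finset.sum_le_sum
              intro a' _
              rw [abs_mul]
              exact mul_le_mul_of_nonneg_left (hM s' a') (abs_nonneg _)
          _ = (∑ a', |π s' a' - πt s' a'|) * M := by rw [Finset.sum_mul]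
          _ ≤ 2 * δTV * M := mul_le_mul_of_nonneg_right (hTV' s') hM0
      calc |_ + _ + _| ≤ |_ + _| + |∑ a', (π s' a' - πt s' a') * Qπt s' a'| := abs_add_le _ _
        _ ≤ |α * ∑ a', (π s' a' - πt s' a') * (-Real.log (πt s' a'))|
            + |∑ a', π s' a' * (Qπ s' a' - Qπt s' a')|
            + |∑ a', (π s' a' - πt s' a') * Qπt s' a'| := by
              have := abs_add_le (α * ∑ a', (π s' a' - πt s' a') * (-Real.log (πt s' a')))
                (∑ a', π s' a' * (Qπ s' a' - Qπt s' a'))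
              linarith
        _ ≤ 2 * δTV * (α * CR) + D + 2 * δTV * M := by linarith
    have hsum : |∑ s', p s a s' * ((α * ∑ a', (π s' a' - πt s' a') * (-Real.log (πt s' a')))
          + (∑ a', π s' a' * (Qπ s' a' - Qπt s' a'))
          + (∑ a', (π s' a' - πt s' a') * Qπt s' a'))|
        ≤ 2 * δTV * (α * CR) + D + 2 * δTV * M := by
      calc |∑ s', p s a s' * _| ≤ ∑ s', |p s a s' * ((α * ∑ a', (π s' a' - πt s' a') * (-Real.log (πt s' a')))
          + (∑ a', π s' a' * (Qπ s' a' - Qπt s' a'))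
          + (∑ a', (π s' a' - πt s' a') * Qπt s' a'))| := Finset.abs_sum_le_sum_abs _ _
        _ ≤ ∑ s', p s a s' * (2 * δTV * (α * CR) + D + 2 * δTV * M) := by
            apply Finset.sum_le_sum
            intro s' _
            rw [abs_mul, abs_of_nonneg ((hp s a).1 s')]
            exact mul_le_mul_of_nonneg_left (hX s') ((hp s a).1 s')
        _ = 2 * δTV * (α * CR) + D + 2 * δTV * M := by
            rw [← Finset.sum_mul, (hp s a).2, one_mul]
    exact mul_le_mul_of_nonneg_left hsum hγ0
  -- D itself satisfies the bound
  obtain ⟨⟨s₁, a₁⟩, -, hb⟩ := Finset.exists_mem_eq_sup' hne f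
  have hDb : D ≤ γ * (2 * δTV * (α * CR) + D + 2 * δTV * M) := by
    have h := key s₁ a₁
    have hDval : D = |Qπ s₁ a₁ - Qπt s₁ a₁| := hD.trans hb
    linarith [hDval.le, hDval.ge]
  have hfin : D ≤ (2 * δTV / (1 - γ)) * (α * CR + γ * M) := by
    rw [div_mul_eq_mul_div, le_div_iff₀ (by linarith : (0:ℝ) < 1 - γ)]
    nlinarith [mul_nonneg (mul_nonneg hδ hα) hCR0]
  exact le_trans (hfD s₀ a₀) hfin
end
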